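/- Let V be a real Hilbert space, U a real normed space, b : U × V → ℝ a bounded bilinear form, and L : V → ℝ a continuous linear functional. Let Θ : U → V be the trial-to-test operator defined via the Riesz representation by ⟨Θ w, v⟩ = b(w, v) for all v ∈ V. Let M ⊆ U be a linear subspace and u ∈ M. Then u minimizes the dual residual w ↦ ‖B w − L‖_{V*} := sup{|b(w, v) − L(v)| : v ∈ V, ‖v‖ ≤ 1} over M if and only if b(u, Θ w) = L(Θ w) for all w ∈ M. (This is the equivalence, asserted in Section 2, between minimizing the residual ‖B·−L‖_{V*} and solving the Petrov–Galerkin problem (2.3) with optimal test functions; applied with M = U it gives the continuous formulation and with M = U_h and V replaced by V_h the discrete DPG scheme.) -/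

import Mathlib

/-- equivalence of residual minimization and the Petrov–Galerkin
problem with optimal test functions, Section 2.  Let `V` be a real Hilbert space,
`U` a real normed space, `b : U × V → ℝ` a bounded bilinear form (encoded as
`b : U →L[ℝ] V →L[ℝ] ℝ`), `L ∈ V*`, and `Θ : U → V` the trial-to-test operator
defined via Riesz representation by `⟨Θ w, v⟩ = b (w, v)` for all `v ∈ V`.  Let
`M ⊆ U` be a subspace and `u ∈ M`.  Then `u` minimizes `w ↦ ‖B w − L‖_{V*}` over `M`
if and only if `b (u, Θ w) = L (Θ w)` for all `w ∈ M`. -/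
theorem stmt_4
    {U V : Type*}
    [NormedAddCommGroup U] [NormedSpace ℝ U]
    [NormedAddCommGroup V] [InnerProductSpace ℝ V] [CompleteSpace V]
    (b : U →L[ℝ] V →L[ℝ] ℝ) (L : V →L[ℝ] ℝ)
    (Θ : U → V) (hΘ : ∀ (w : U) (v : V), (inner ℝ (Θ w) v : ℝ) = b w v)
    (M : Submodule ℝ U) (u : U) (hu : u ∈ M) :
    (∀ w ∈ M, ‖b u - L‖ ≤ ‖b w - L‖) ↔ (∀ w ∈ M, b u (Θ w) = L (Θ w)) := by
  classical
  set r : V := (InnerProductSpace.toDual ℝ V).symm L with hr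
  have hrL : ∀ v : V, (inner ℝ r v : ℝ) = L v := fun v =>
    InnerProductSpace.toDual_symm_apply
  -- Θ is linear
  have hΘlin : ∀ (x y : U) (c : ℝ), Θ (x + c • y) = Θ x + c • Θ y := by
    intro x y c
    apply ext_inner_left ℝ
    intro v
    rw [real_inner_comm, hΘ, map_add, map_smul]
    simp only [← hΘ, real_inner_comm _ v]
    rw [inner_add_left, real_inner_smul_left, hΘ, hΘ]
    simp
  let Θₗ : U →ₗ[ℝ] V :=
    { toFun := Θ
      map_add' := fun x y => by simpa using hΘlin x y 1
      map_smul' := fun c y => by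
        have := hΘlin 0 y c
        have h0 : Θ (0 : U) = 0 := by
          apply ext_inner_left ℝ
          intro v
          rw [real_inner_comm, hΘ]
          simp
        simpa [h0] using this }
  -- norm identity
  have hnorm : ∀ w : U, ‖b w - L‖ = ‖Θ w - r‖ := by
    intro w
    have : (InnerProductSpace.toDualMap ℝ V) (Θ w - r) = b w - L := by
      ext v
      simp [InnerProductSpace.toDualMap_apply_apply, inner_sub_left, hΘ, hrL]
    rw [← this]
    exact (InnerProductSpace.toDualMap ℝ V).norm_map _
  have hinner : ∀ w : U, (inner ℝ (Θ u - r) (Θ w) : ℝ) = b u (Θ w) - L (Θ w) := by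
    intro w
    rw [inner_sub_left, hΘ, hrL]
  set K : Submodule ℝ V := M.map Θₗ with hK
  have hΘuK : Θ u ∈ K := ⟨u, hu, rfl⟩
  constructor
  · intro hmin w hw
    have key : ∀ z ∈ K, (inner ℝ (r - Θ u) z : ℝ) = 0 := by
      apply (Submodule.norm_eq_iInf_iff_real_inner_eq_zero K hΘuK).1
      apply le_antisymm
      · apply le_ciInf
        rintro ⟨z, x, hx, rfl⟩
        calc ‖r - Θ u‖ = ‖b u - L‖ := by rw [hnorm, norm_sub_rev]
          _ ≤ ‖b x - L‖ := hmin x hx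
          _ = ‖r - Θₗ x‖ := by rw [hnorm, norm_sub_rev]; rfl
      · exact ciInf_le ⟨0, by rintro y ⟨z, rfl⟩; exact norm_nonneg _⟩ (⟨Θ u, hΘuK⟩ : K)
    have h2 : (inner ℝ (r - Θ u) (Θ w) : ℝ) = 0 := key (Θₗ w) ⟨w, hw, rfl⟩
    rw [← neg_sub (Θ u) r, inner_neg_left, neg_eq_zero, hinner] at h2
    linarith
  · intro horth w hw
    have hperp : ∀ z ∈ K, (inner ℝ (r - Θ u) z : ℝ) = 0 := by
      rintro z ⟨x, hx, rfl⟩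
      show (inner ℝ (r - Θ u) (Θ x) : ℝ) = 0
      rw [← neg_sub (Θ u) r, inner_neg_left, neg_eq_zero, hinner]
      have := horth x hx
      linarith
    have := (Submodule.norm_eq_iInf_iff_real_inner_eq_zero K hΘuK).2 hperp
    rw [hnorm u, hnorm w, norm_sub_rev (Θ u) r, norm_sub_rev (Θ w) r, this]
    exact ciInf_le ⟨0, by rintro y ⟨z, rfl⟩; exact norm_nonneg _⟩ (⟨Θ w, w, hw, rfl⟩ : K)
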